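/- arXiv:1707.01350 — 5 statements merged into one kernel-verified Lean document; each statement's English description precedes it below -/
import Mathlib

section
/- Let U₁ and U₂ be K×K invertible real matrices with ‖U₁ - U₂‖_F ≤ ε. Then ‖(U₁U₁ᵀ)⁻¹ - (U₂U₂ᵀ)⁻¹‖_F ≤ (‖U₁‖ + ‖U₂‖) / (λ_min(U₁)² λ_min(U₂)²) · ε, where λ_min denotes the smallest singular value. -/
open scoped BigOperators
open scoped Matrix

noncomputable def frobNorm {m n : Type*} [Fintype m] [Fintype n] (M : Matrix m n ℝ) : ℝ :=
  Real.sqrt (∑ i, ∑ j, (M i j)^2)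

noncomputable def specNorm {m n : Type*} [Fintype m] [Fintype n] [DecidableEq n] (M : Matrix m n ℝ) : ℝ :=
  ‖(Matrix.toEuclideanLin M).toContinuousLinearMap‖

noncomputable def lamMin {m : Type*} [Fintype m] [DecidableEq m] (M : Matrix m m ℝ) : ℝ :=
  ⨅ (v : {v : EuclideanSpace ℝ m // ‖v‖ = 1}), @inner ℝ _ _ v.1 (Matrix.toEuclideanLin M v.1)

noncomputable def lamMax {m : Type*} [Fintype m] [DecidableEq m] (M : Matrix m m ℝ) : ℝ :=
  ⨆ (v : {v : EuclideanSpace ℝ m // ‖v‖ = 1}), @inner ℝ _ _ v.1 (Matrix.toEuclideanLin M v.1)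

noncomputable def sMin {m n : Type*} [Fintype m] [Fintype n] [DecidableEq n] (M : Matrix m n ℝ) : ℝ :=
  Real.sqrt (lamMin (Mᵀ * M))

noncomputable def sMax {m n : Type*} [Fintype m] [Fintype n] [DecidableEq n] (M : Matrix m n ℝ) : ℝ :=
  Real.sqrt (lamMax (Mᵀ * M))

open scoped Matrix.Norms.L2Operator

namespace StmtAux

variable {m n l : Type*} [Fintype m] [Fintype n] [Fintype l]

lemma specNorm_eq [DecidableEq n] (A : Matrix m n ℝ) : specNorm A = ‖A‖ := rfl

lemma frob_nonneg (M : Matrix m n ℝ) : 0 ≤ frobNorm M := Real.sqrt_nonneg _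

lemma frob_transpose (M : Matrix m n ℝ) : frobNorm Mᵀ = frobNorm M := by
  rw [frobNorm, frobNorm, Finset.sum_comm]; rfl

lemma frob_neg (M : Matrix m n ℝ) : frobNorm (-M) = frobNorm M := by
  simp [frobNorm]

lemma frob_eq_norm (M : Matrix m n ℝ) :
    frobNorm M = ‖(WithLp.equiv 2 (m × n → ℝ)).symm (fun p => M p.1 p.2)‖ := by
  rw [EuclideanSpace.norm_eq, frobNorm, Fintype.sum_prod_type]
  congr 1
  apply Finset.sum_congr rfl
  intro i _
  apply Finset.sum_congr rfl
  intro j _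
  simp [Real.norm_eq_abs, sq_abs]

lemma frob_add (X Y : Matrix m n ℝ) : frobNorm (X + Y) ≤ frobNorm X + frobNorm Y := by
  rw [frob_eq_norm, frob_eq_norm, frob_eq_norm]
  have h : (WithLp.equiv 2 (m × n → ℝ)).symm (fun p => (X+Y) p.1 p.2)
      = (WithLp.equiv 2 (m × n → ℝ)).symm (fun p => X p.1 p.2)
        + (WithLp.equiv 2 (m × n → ℝ)).symm (fun p => Y p.1 p.2) := by
    ext p; simp [Matrix.add_apply]
  rw [h]; exact norm_add_le _ _

lemma col_sq_le (A : Matrix m n ℝ) (B : Matrix n l ℝ) [DecidableEq n] (j : l) :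
    ∑ i, ((A * B) i j)^2 ≤ ‖A‖^2 * ∑ i, (B i j)^2 := by
  set c : EuclideanSpace ℝ n := (WithLp.equiv 2 (n → ℝ)).symm (fun i => B i j) with hc
  have h1 : ∑ i, ((A * B) i j)^2
      = ‖(EuclideanSpace.equiv m ℝ).symm (A *ᵥ (WithLp.equiv 2 (n → ℝ)) c)‖^2 := by
    rw [show ‖(EuclideanSpace.equiv m ℝ).symm (A *ᵥ (WithLp.equiv 2 (n → ℝ)) c)‖^2
        = ∑ i, ((EuclideanSpace.equiv m ℝ).symm (A *ᵥ (WithLp.equiv 2 (n → ℝ)) c) i)^2 from by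
      rw [EuclideanSpace.norm_eq, Real.sq_sqrt (by positivity)]; simp [sq_abs]]
    apply Finset.sum_congr rfl
    intro i _
    simp [hc, Matrix.mul_apply, Matrix.mulVec, dotProduct]
  have h2 : ‖(EuclideanSpace.equiv m ℝ).symm (A *ᵥ (WithLp.equiv 2 (n → ℝ)) c)‖ ≤ ‖A‖ * ‖c‖ :=
    Matrix.l2_opNorm_mulVec A c
  have h3 : ‖c‖^2 = ∑ i, (B i j)^2 := by
    rw [EuclideanSpace.norm_eq, Real.sq_sqrt (by positivity)]
    simp [hc, sq_abs]
  nlinarith [norm_nonneg c, norm_nonneg A,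
    norm_nonneg ((EuclideanSpace.equiv m ℝ).symm (A *ᵥ (WithLp.equiv 2 (n → ℝ)) c))]

lemma frob_mul_le (A : Matrix m n ℝ) (B : Matrix n l ℝ) [DecidableEq n] :
    frobNorm (A * B) ≤ ‖A‖ * frobNorm B := by
  rw [frobNorm, frobNorm]
  rw [show (‖A‖ * Real.sqrt (∑ i, ∑ j, (B i j)^2))
      = Real.sqrt (‖A‖^2 * ∑ i, ∑ j, (B i j)^2) from by
    rw [Real.sqrt_mul (by positivity), Real.sqrt_sq (norm_nonneg A)]]
  apply Real.sqrt_le_sqrt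
  have e1 : ∑ i : m, ∑ j : l, ((A*B) i j)^2 = ∑ j : l, ∑ i : m, ((A*B) i j)^2 := Finset.sum_comm
  have e2 : ∑ i : n, ∑ j : l, (B i j)^2 = ∑ j : l, ∑ i : n, (B i j)^2 := Finset.sum_comm
  rw [e1, e2, Finset.mul_sum]
  apply Finset.sum_le_sum
  intro j _
  exact col_sq_le A B j

lemma transpose_l2_norm [DecidableEq m] [DecidableEq n] (A : Matrix m n ℝ) : ‖Aᵀ‖ = ‖A‖ := by
  have h : Aᵀ = Aᴴ := by ext i j; simp [Matrix.conjTranspose_apply]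
  rw [h, Matrix.l2_opNorm_conjTranspose]

lemma frob_mul_le' (A : Matrix m n ℝ) (B : Matrix n l ℝ) [DecidableEq n] [DecidableEq l] :
    frobNorm (A * B) ≤ frobNorm A * ‖B‖ := by
  have h1 : frobNorm (A * B) = frobNorm (Bᵀ * Aᵀ) := by
    rw [← Matrix.transpose_mul, frob_transpose]
  rw [h1]
  calc frobNorm (Bᵀ * Aᵀ) ≤ ‖Bᵀ‖ * frobNorm Aᵀ := frob_mul_le _ _
  _ = frobNorm A * ‖B‖ := by
      rw [transpose_l2_norm, frob_transpose]; ring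

end StmtAux

namespace StmtAux2

variable {m : Type*} [Fintype m] [DecidableEq m]

lemma lamMin_le (M : Matrix m m ℝ) {v : EuclideanSpace ℝ m} (hv : ‖v‖ = 1) :
    lamMin M ≤ @inner ℝ _ _ v (Matrix.toEuclideanLin M v) := by
  apply ciInf_le _ (⟨v, hv⟩ : {v : EuclideanSpace ℝ m // ‖v‖ = 1})
  refine ⟨-‖M‖, ?_⟩
  rintro x ⟨⟨w, hw⟩, rfl⟩
  simp only
  have h1 : |@inner ℝ _ _ w ((Matrix.toEuclideanLin M) w)| ≤ ‖w‖ * ‖(Matrix.toEuclideanLin M) w‖ :=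
    abs_real_inner_le_norm _ _
  have h2 : ‖(Matrix.toEuclideanLin M) w‖ ≤ ‖M‖ * ‖w‖ :=
    (LinearMap.toContinuousLinearMap (Matrix.toEuclideanLin M)).le_opNorm w
  rw [hw] at h1 h2
  have := neg_abs_le (@inner ℝ _ _ w ((Matrix.toEuclideanLin M) w))
  nlinarith

lemma inner_gram (U : Matrix m m ℝ) (v : EuclideanSpace ℝ m) :
    @inner ℝ _ _ v (Matrix.toEuclideanLin (Uᵀ * U) v)
      = ‖(EuclideanSpace.equiv m ℝ).symm (U *ᵥ (WithLp.equiv 2 (m → ℝ)) v)‖ ^ 2 := by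
  rw [show ‖(EuclideanSpace.equiv m ℝ).symm (U *ᵥ (WithLp.equiv 2 (m → ℝ)) v)‖^2
      = ∑ i, ((U *ᵥ (WithLp.equiv 2 (m → ℝ)) v) i)^2 from by
    rw [EuclideanSpace.norm_eq, Real.sq_sqrt (by positivity)]; simp [sq_abs]]
  rw [Matrix.toEuclideanLin_apply, PiLp.inner_apply]
  simp only [RCLike.inner_apply, conj_trivial]
  have : ∑ x, ((Uᵀ * U) *ᵥ v.ofLp) x * v.ofLp x
      = ((WithLp.equiv 2 (m → ℝ)) v) ⬝ᵥ ((Uᵀ * U) *ᵥ ((WithLp.equiv 2 (m → ℝ)) v)) := by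
    simp [dotProduct, mul_comm]
  rw [this, ← Matrix.mulVec_mulVec, Matrix.dotProduct_mulVec, Matrix.vecMul_transpose]
  simp [dotProduct, sq]

lemma sMin_mulVec (U : Matrix m m ℝ) (y : EuclideanSpace ℝ m) :
    sMin U * ‖y‖ ≤ ‖(EuclideanSpace.equiv m ℝ).symm (U *ᵥ (WithLp.equiv 2 (m → ℝ)) y)‖ := by
  rcases eq_or_ne y 0 with rfl | hy
  · simp
  · have hny : (0:ℝ) < ‖y‖ := norm_pos_iff.mpr hy
    set v : EuclideanSpace ℝ m := ‖y‖⁻¹ • y with hv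
    have hv1 : ‖v‖ = 1 := by
      rw [hv, norm_smul, norm_inv, norm_norm, inv_mul_cancel₀ (ne_of_gt hny)]
    have key := lamMin_le (Uᵀ * U) hv1
    rw [inner_gram] at key
    have h1 : sMin U ≤ ‖(EuclideanSpace.equiv m ℝ).symm (U *ᵥ (WithLp.equiv 2 (m → ℝ)) v)‖ := by
      rw [sMin]
      calc Real.sqrt (lamMin (Uᵀ * U))
          ≤ Real.sqrt (‖(EuclideanSpace.equiv m ℝ).symm (U *ᵥ (WithLp.equiv 2 (m → ℝ)) v)‖^2) :=
            Real.sqrt_le_sqrt key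
        _ = _ := Real.sqrt_sq (norm_nonneg _)
    have h2 : (EuclideanSpace.equiv m ℝ).symm (U *ᵥ (WithLp.equiv 2 (m → ℝ)) v)
        = ‖y‖⁻¹ • (EuclideanSpace.equiv m ℝ).symm (U *ᵥ (WithLp.equiv 2 (m → ℝ)) y) := by
      rw [hv, ← map_smul]
      congr 1
      rw [show (WithLp.equiv 2 (m → ℝ)) (‖y‖⁻¹ • y) = ‖y‖⁻¹ • ((WithLp.equiv 2 (m → ℝ)) y) from rfl,
        Matrix.mulVec_smul]
    rw [h2, norm_smul, norm_inv, norm_norm] at h1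
    calc sMin U * ‖y‖
        ≤ (‖y‖⁻¹ * ‖(EuclideanSpace.equiv m ℝ).symm (U *ᵥ (WithLp.equiv 2 (m → ℝ)) y)‖) * ‖y‖ :=
          mul_le_mul_of_nonneg_right h1 (le_of_lt hny)
      _ = _ := by field_simp

lemma lamMin_pos [Nonempty m] (U : Matrix m m ℝ) (h : IsUnit U.det) :
    0 < lamMin (Uᵀ * U) := by
  have hinv : U⁻¹ ≠ 0 := by
    intro h0
    have h1 := Matrix.nonsing_inv_mul U h
    rw [h0, Matrix.zero_mul] at h1
    have := congrFun (congrFun h1 (Classical.arbitrary m)) (Classical.arbitrary m)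
    simp [Matrix.one_apply_eq] at this
  have hNpos : (0:ℝ) < ‖U⁻¹‖ := by
    rw [norm_pos_iff]
    exact hinv
  have : Nonempty {v : EuclideanSpace ℝ m // ‖v‖ = 1} := by
    refine ⟨⟨EuclideanSpace.single (Classical.arbitrary m) (1:ℝ), ?_⟩⟩
    rw [EuclideanSpace.norm_single]; norm_num
  have hb : ∀ v : {v : EuclideanSpace ℝ m // ‖v‖ = 1},
      (‖U⁻¹‖⁻¹)^2 ≤ @inner ℝ _ _ v.1 (Matrix.toEuclideanLin (Uᵀ * U) v.1) := by
    rintro ⟨v, hv1⟩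
    rw [inner_gram]
    set w := (EuclideanSpace.equiv m ℝ).symm (U *ᵥ (WithLp.equiv 2 (m → ℝ)) v) with hw
    have hvw : v = (EuclideanSpace.equiv m ℝ).symm (U⁻¹ *ᵥ (WithLp.equiv 2 (m → ℝ)) w) := by
      rw [hw]
      simp only [EuclideanSpace.equiv]
      ext i
      simp [Matrix.mulVec_mulVec, Matrix.nonsing_inv_mul U h]
    have hb : ‖v‖ ≤ ‖U⁻¹‖ * ‖w‖ := by
      conv_lhs => rw [hvw]
      exact Matrix.l2_opNorm_mulVec U⁻¹ w
    rw [hv1] at hb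
    have hwn : ‖U⁻¹‖⁻¹ ≤ ‖w‖ := by
      rw [inv_le_iff_one_le_mul₀' hNpos]
      linarith [mul_comm ‖U⁻¹‖ ‖w‖]
    calc (‖U⁻¹‖⁻¹)^2 ≤ ‖w‖^2 := pow_le_pow_left₀ (by positivity) hwn 2
      _ = _ := rfl
  have hle : (‖U⁻¹‖⁻¹)^2 ≤ lamMin (Uᵀ * U) := le_ciInf hb
  have : (0:ℝ) < (‖U⁻¹‖⁻¹)^2 := by positivity
  linarith

lemma sMin_pos [Nonempty m] (U : Matrix m m ℝ) (h : IsUnit U.det) : 0 < sMin U :=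
  Real.sqrt_pos.mpr (lamMin_pos U h)

lemma opNorm_inv_le [Nonempty m] (U : Matrix m m ℝ) (h : IsUnit U.det) :
    ‖U⁻¹‖ ≤ 1 / sMin U := by
  have hs := sMin_pos U h
  rw [Matrix.l2_opNorm_def]
  apply ContinuousLinearMap.opNorm_le_bound _ (by positivity)
  intro x
  set y := Matrix.toEuclideanLin U⁻¹ x with hy
  have key := sMin_mulVec U y
  have h2 : (EuclideanSpace.equiv m ℝ).symm (U *ᵥ (WithLp.equiv 2 (m → ℝ)) y) = x := by
    rw [hy, Matrix.toEuclideanLin_apply]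
    ext i
    simp [Matrix.mulVec_mulVec, Matrix.mul_nonsing_inv U h]
  rw [h2] at key
  have h3 : ‖(LinearEquiv.trans Matrix.toEuclideanLin LinearMap.toContinuousLinearMap) U⁻¹ x‖
      = ‖y‖ := rfl
  rw [h3, div_mul_eq_mul_div, le_div_iff₀ hs]
  nlinarith

end StmtAux2

open StmtAux StmtAux2

theorem stmt_1 {K : ℕ} (U₁ U₂ : Matrix (Fin K) (Fin K) ℝ)
    (h₁ : IsUnit U₁.det) (h₂ : IsUnit U₂.det) (ε : ℝ)
    (hε : frobNorm (U₁ - U₂) ≤ ε) :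
    frobNorm ((U₁ * U₁ᵀ)⁻¹ - (U₂ * U₂ᵀ)⁻¹)
      ≤ (specNorm U₁ + specNorm U₂) / (sMin U₁ ^ 2 * sMin U₂ ^ 2) * ε := by
  have hε0 : (0:ℝ) ≤ ε := le_trans (frob_nonneg _) hε
  rcases Nat.eq_zero_or_pos K with hK | hK
  · subst hK
    have hL : frobNorm ((U₁ * U₁ᵀ)⁻¹ - (U₂ * U₂ᵀ)⁻¹) = 0 := by
      simp [frobNorm]
    have hE : IsEmpty {v : EuclideanSpace ℝ (Fin 0) // ‖v‖ = 1} := by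
      constructor
      rintro ⟨v, hv⟩
      have : v = 0 := Subsingleton.elim _ _
      rw [this] at hv
      simp at hv
    have hs : sMin U₁ = 0 := by
      rw [sMin, lamMin, Real.iInf_of_isEmpty, Real.sqrt_zero]
    rw [hL, hs]
    simp
  · haveI : Nonempty (Fin K) := ⟨⟨0, hK⟩⟩
    have hA : IsUnit (U₁ * U₁ᵀ).det := by
      rw [Matrix.det_mul, Matrix.det_transpose]; exact h₁.mul h₁
    have hB : IsUnit (U₂ * U₂ᵀ).det := by
      rw [Matrix.det_mul, Matrix.det_transpose]; exact h₂.mul h₂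
    have hm1 := sMin_pos U₁ h₁
    have hm2 := sMin_pos U₂ h₂
    have hid : (U₁*U₁ᵀ)⁻¹ - (U₂*U₂ᵀ)⁻¹
        = (U₁*U₁ᵀ)⁻¹ * ((U₂*U₂ᵀ - U₁*U₁ᵀ) * (U₂*U₂ᵀ)⁻¹) := by
      rw [Matrix.sub_mul, Matrix.mul_nonsing_inv _ hB, Matrix.mul_sub, Matrix.mul_one,
        ← Matrix.mul_assoc, Matrix.nonsing_inv_mul _ hA, Matrix.one_mul]
    have hs12 : (0:ℝ) ≤ specNorm U₁ + specNorm U₂ := by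
      rw [specNorm_eq, specNorm_eq]
      positivity
    have hfd : frobNorm (U₂*U₂ᵀ - U₁*U₁ᵀ) ≤ (specNorm U₁ + specNorm U₂) * ε := by
      have hdiff : U₂*U₂ᵀ - U₁*U₁ᵀ = (U₂ - U₁) * U₂ᵀ + U₁ * (U₂ - U₁)ᵀ := by
        rw [Matrix.transpose_sub]
        noncomm_ring
      rw [hdiff]
      have t1 : frobNorm ((U₂ - U₁) * U₂ᵀ) ≤ frobNorm (U₂ - U₁) * ‖U₂ᵀ‖ := frob_mul_le' _ _
      have t2 : frobNorm (U₁ * (U₂ - U₁)ᵀ) ≤ ‖U₁‖ * frobNorm (U₂ - U₁)ᵀ := frob_mul_le _ _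
      have e1 : frobNorm (U₂ - U₁) = frobNorm (U₁ - U₂) := by
        rw [← frob_neg (U₁ - U₂), neg_sub]
      have e2 : frobNorm (U₂ - U₁)ᵀ = frobNorm (U₂ - U₁) := frob_transpose _
      have e3 : ‖U₂ᵀ‖ = ‖U₂‖ := transpose_l2_norm _
      rw [e3, e1] at t1
      rw [e2, e1] at t2
      have tri := frob_add ((U₂ - U₁) * U₂ᵀ) (U₁ * (U₂ - U₁)ᵀ)
      rw [specNorm_eq, specNorm_eq]
      have hn1 : (0:ℝ) ≤ ‖U₁‖ := norm_nonneg _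
      have hn2 : (0:ℝ) ≤ ‖U₂‖ := norm_nonneg _
      nlinarith [frob_nonneg (U₁ - U₂)]
    have hAinv : ‖(U₁*U₁ᵀ)⁻¹‖ ≤ 1/(sMin U₁^2) := by
      rw [Matrix.mul_inv_rev]
      calc ‖(U₁ᵀ)⁻¹ * U₁⁻¹‖ ≤ ‖(U₁ᵀ)⁻¹‖ * ‖U₁⁻¹‖ := Matrix.l2_opNorm_mul _ _
        _ = ‖U₁⁻¹‖ * ‖U₁⁻¹‖ := by
            rw [← Matrix.transpose_nonsing_inv, transpose_l2_norm]
        _ ≤ (1/sMin U₁) * (1/sMin U₁) :=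
            mul_le_mul (opNorm_inv_le U₁ h₁) (opNorm_inv_le U₁ h₁) (norm_nonneg _) (by positivity)
        _ = 1/(sMin U₁^2) := by rw [sq]; field_simp
    have hBinv : ‖(U₂*U₂ᵀ)⁻¹‖ ≤ 1/(sMin U₂^2) := by
      rw [Matrix.mul_inv_rev]
      calc ‖(U₂ᵀ)⁻¹ * U₂⁻¹‖ ≤ ‖(U₂ᵀ)⁻¹‖ * ‖U₂⁻¹‖ := Matrix.l2_opNorm_mul _ _
        _ = ‖U₂⁻¹‖ * ‖U₂⁻¹‖ := by
            rw [← Matrix.transpose_nonsing_inv, transpose_l2_norm]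
        _ ≤ (1/sMin U₂) * (1/sMin U₂) :=
            mul_le_mul (opNorm_inv_le U₂ h₂) (opNorm_inv_le U₂ h₂) (norm_nonneg _) (by positivity)
        _ = 1/(sMin U₂^2) := by rw [sq]; field_simp
    have q1 : frobNorm (U₂*U₂ᵀ - U₁*U₁ᵀ) * ‖(U₂*U₂ᵀ)⁻¹‖
        ≤ ((specNorm U₁ + specNorm U₂) * ε) * (1/(sMin U₂^2)) :=
      mul_le_mul hfd hBinv (norm_nonneg _) (by positivity)
    calc frobNorm ((U₁*U₁ᵀ)⁻¹ - (U₂*U₂ᵀ)⁻¹)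
        = frobNorm ((U₁*U₁ᵀ)⁻¹ * ((U₂*U₂ᵀ - U₁*U₁ᵀ) * (U₂*U₂ᵀ)⁻¹)) := by rw [hid]
      _ ≤ ‖(U₁*U₁ᵀ)⁻¹‖ * frobNorm ((U₂*U₂ᵀ - U₁*U₁ᵀ) * (U₂*U₂ᵀ)⁻¹) := frob_mul_le _ _
      _ ≤ ‖(U₁*U₁ᵀ)⁻¹‖ * (frobNorm (U₂*U₂ᵀ - U₁*U₁ᵀ) * ‖(U₂*U₂ᵀ)⁻¹‖) :=
          mul_le_mul_of_nonneg_left (frob_mul_le' _ _) (norm_nonneg _)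
      _ ≤ (1/(sMin U₁^2)) * (((specNorm U₁ + specNorm U₂) * ε) * (1/(sMin U₂^2))) :=
          mul_le_mul hAinv q1
            (mul_nonneg (frob_nonneg _) (norm_nonneg _)) (by positivity)
      _ = (specNorm U₁ + specNorm U₂) / (sMin U₁ ^ 2 * sMin U₂ ^ 2) * ε := by
          field_simp
end

section
/- Let P be an n×n real symmetric matrix of rank K with K-th largest (in absolute value) eigenvalue λ_K(P) ≠ 0, and let A be a symmetric matrix. Let L̂ and L be the diagonal K×K matrices of the K largest-in-absolute-value eigenvalues of A and P respectively, and let O_P be the orthogonal matrix from the Davis–Kahan bound satisfying ‖Û - U O_P‖_F ≤ 2√(2K)‖A - P‖/λ_K(P). Then ‖L̂ - O_Pᵀ L O_P‖ ≤ (2√(2K)(‖A‖+‖P‖)/λ_K(P) + 1)·‖A - P‖. -/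
open scoped BigOperators
open scoped Matrix

open scoped Matrix.Norms.L2Operator in
lemma specNorm_eq_norm {m n : Type*} [Fintype m] [Fintype n] [DecidableEq n]
    (M : Matrix m n ℝ) : specNorm M = ‖M‖ := rfl

open scoped Matrix.Norms.L2Operator in
lemma spec_le_frob {m n : Type*} [Fintype m] [Fintype n] [DecidableEq n]
    (M : Matrix m n ℝ) : ‖M‖ ≤ frobNorm M := by
  rw [Matrix.l2_opNorm_def]
  apply ContinuousLinearMap.opNorm_le_bound _ (Real.sqrt_nonneg _)
  intro x
  have hx : ‖x‖ = Real.sqrt (∑ j, (x j)^2) := by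
    rw [EuclideanSpace.norm_eq]; simp [sq_abs]
  have happ : ∀ i, (Matrix.toEuclideanLin M x) i = ∑ j, M i j * x j := by
    intro i; rfl
  have hnorm : ‖(Matrix.toEuclideanLin.trans LinearMap.toContinuousLinearMap) M x‖
      = Real.sqrt (∑ i, (∑ j, M i j * x j)^2) := by
    rw [EuclideanSpace.norm_eq]
    congr 1
    refine Finset.sum_congr rfl fun i _ => ?_
    rw [Real.norm_eq_abs, sq_abs]
    exact congrArg (· ^ 2) (happ i)
  rw [hnorm, hx, ← Real.sqrt_mul (by positivity)]
  apply Real.sqrt_le_sqrt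
  rw [Finset.sum_mul]
  refine Finset.sum_le_sum fun i _ => ?_
  exact Finset.sum_mul_sq_le_sq_mul_sq _ _ _

open scoped Matrix.Norms.L2Operator in
lemma norm_transpose_l2 {m n : Type*} [Fintype m] [Fintype n] [DecidableEq n] [DecidableEq m]
    (M : Matrix m n ℝ) : ‖Mᵀ‖ = ‖M‖ := by
  rw [← Matrix.conjTranspose_eq_transpose_of_trivial, Matrix.l2_opNorm_conjTranspose]

open scoped Matrix.Norms.L2Operator in
lemma norm_semiorth_le_one {m n : Type*} [Fintype m] [Fintype n] [DecidableEq n] [DecidableEq m]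
    (M : Matrix m n ℝ) (h : Mᵀ * M = 1) : ‖M‖ ≤ 1 := by
  have h2 : ‖M‖ * ‖M‖ = ‖(1 : Matrix n n ℝ)‖ := by
    rw [← Matrix.l2_opNorm_conjTranspose_mul_self, Matrix.conjTranspose_eq_transpose_of_trivial, h]
  have hone : ‖(1 : Matrix n n ℝ)‖ ≤ 1 := by
    rw [Matrix.cstar_norm_def, map_one]
    exact ContinuousLinearMap.norm_id_le
  nlinarith [norm_nonneg M]

theorem stmt_2 {n K : ℕ}
    (A P : Matrix (Fin n) (Fin n) ℝ) (hA : Aᵀ = A) (hP : Pᵀ = P) (hrank : P.rank = K)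
    (U Uh : Matrix (Fin n) (Fin K) ℝ) (L Lh : Matrix (Fin K) (Fin K) ℝ)
    (hLdiag : L.IsDiag) (hLhdiag : Lh.IsDiag)
    (hU : Uᵀ * U = 1) (hUh : Uhᵀ * Uh = 1)
    (hPdecomp : P = U * L * Uᵀ) (hAeig : A * Uh = Uh * Lh)
    (hbest : specNorm (Uh * Lh * Uhᵀ - U * L * Uᵀ) ≤ specNorm (A - P))
    (lK : ℝ) (hlK : 0 < lK) (hlKval : specNorm L⁻¹ = 1 / lK)
    (O : Matrix (Fin K) (Fin K) ℝ) (hO : Oᵀ * O = 1)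
    (hDK : frobNorm (Uh - U * O) ≤ 2 * Real.sqrt (2 * K) * specNorm (A - P) / lK) :
    specNorm (Lh - Oᵀ * L * O)
      ≤ (2 * Real.sqrt (2 * K) * (specNorm A + specNorm P) / lK + 1) * specNorm (A - P) := by
  open scoped Matrix.Norms.L2Operator in
  simp only [specNorm_eq_norm] at *
  -- abbreviations
  set E := Uh - U * O with hE
  have hU' : ∀ {p : Type} (X : Matrix (Fin K) p ℝ), Uᵀ * (U * X) = X := by
    intro p X; rw [← Matrix.mul_assoc, hU, Matrix.one_mul]
  have hLh : Lh = Uhᵀ * (A * Uh) := by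
    rw [hAeig, ← Matrix.mul_assoc, hUh, Matrix.one_mul]
  have key : Lh - Oᵀ * L * O =
      Uhᵀ * (A * E) + Uhᵀ * ((A - P) * (U * O)) + Eᵀ * (P * (U * O)) := by
    rw [hLh, hPdecomp, hE]
    simp only [Matrix.mul_sub, Matrix.sub_mul, Matrix.transpose_sub, Matrix.transpose_mul,
      Matrix.mul_assoc, hU']
    abel
  -- norms of factors
  have hUhn : ‖Uhᵀ‖ ≤ 1 := by rw [norm_transpose_l2]; exact norm_semiorth_le_one _ hUh
  have hUOn : ‖U * O‖ ≤ 1 := by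
    refine norm_semiorth_le_one _ ?_
    rw [Matrix.transpose_mul, Matrix.mul_assoc, ← Matrix.mul_assoc Uᵀ, hU, Matrix.one_mul, hO]
  set D := 2 * Real.sqrt (2 * K) * ‖A - P‖ / lK with hD
  have hEn : ‖E‖ ≤ D := le_trans (spec_le_frob E) hDK
  have hEtn : ‖Eᵀ‖ ≤ D := by rw [norm_transpose_l2]; exact hEn
  have hDpos : 0 ≤ D := le_trans (norm_nonneg E) hEn
  have t1 : ‖Uhᵀ * (A * E)‖ ≤ ‖A‖ * D :=
    calc ‖Uhᵀ * (A * E)‖ ≤ ‖Uhᵀ‖ * ‖A * E‖ := Matrix.l2_opNorm_mul _ _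
      _ ≤ 1 * (‖A‖ * ‖E‖) := by
          refine mul_le_mul hUhn (Matrix.l2_opNorm_mul _ _) (norm_nonneg _) zero_le_one
      _ ≤ ‖A‖ * D := by
          rw [one_mul]
          exact mul_le_mul_of_nonneg_left hEn (norm_nonneg _)
  have t2 : ‖Uhᵀ * ((A - P) * (U * O))‖ ≤ ‖A - P‖ :=
    calc ‖Uhᵀ * ((A - P) * (U * O))‖ ≤ ‖Uhᵀ‖ * ‖(A - P) * (U * O)‖ := Matrix.l2_opNorm_mul _ _
      _ ≤ 1 * (‖A - P‖ * 1) := by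
          refine mul_le_mul hUhn ?_ (norm_nonneg _) zero_le_one
          calc ‖(A - P) * (U * O)‖ ≤ ‖A - P‖ * ‖U * O‖ := Matrix.l2_opNorm_mul _ _
            _ ≤ ‖A - P‖ * 1 := mul_le_mul_of_nonneg_left hUOn (norm_nonneg _)
      _ = ‖A - P‖ := by ring
  have t3 : ‖Eᵀ * (P * (U * O))‖ ≤ ‖P‖ * D :=
    calc ‖Eᵀ * (P * (U * O))‖ ≤ ‖Eᵀ‖ * ‖P * (U * O)‖ := Matrix.l2_opNorm_mul _ _
      _ ≤ D * (‖P‖ * 1) := by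
          refine mul_le_mul hEtn ?_ (norm_nonneg _) hDpos
          calc ‖P * (U * O)‖ ≤ ‖P‖ * ‖U * O‖ := Matrix.l2_opNorm_mul _ _
            _ ≤ ‖P‖ * 1 := mul_le_mul_of_nonneg_left hUOn (norm_nonneg _)
      _ = ‖P‖ * D := by ring
  calc ‖Lh - Oᵀ * L * O‖ = ‖Uhᵀ * (A * E) + Uhᵀ * ((A - P) * (U * O)) + Eᵀ * (P * (U * O))‖ := by
        rw [key]
    _ ≤ ‖Uhᵀ * (A * E)‖ + ‖Uhᵀ * ((A - P) * (U * O))‖ + ‖Eᵀ * (P * (U * O))‖ := norm_add₃_le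
    _ ≤ ‖A‖ * D + ‖A - P‖ + ‖P‖ * D := by linarith
    _ = (2 * Real.sqrt (2 * K) * (‖A‖ + ‖P‖) / lK + 1) * ‖A - P‖ := by
        rw [hD]; field_simp; ring
end

section
/- Under the assumptions of the previous statement, additionally assuming λ_K(A) ≠ 0 (the K-th largest in absolute value eigenvalue of A is nonzero), it holds that ‖L̂⁻¹ - O_Pᵀ L⁻¹ O_P‖ ≤ (2√(2K)(‖A‖+‖P‖)/λ_K(P) + 1)·‖A - P‖ / (λ_K(A)·λ_K(P)). -/
open scoped BigOperators
open scoped Matrix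

open scoped RealInnerProductSpace
set_option linter.unusedVariables false


noncomputable def clm {m n : Type*} [Fintype m] [Fintype n] [DecidableEq n] (M : Matrix m n ℝ) :
    EuclideanSpace ℝ n →L[ℝ] EuclideanSpace ℝ m :=
  (Matrix.toEuclideanLin M).toContinuousLinearMap

set_option linter.unusedSectionVars false
variable {m n p : Type*} [Fintype m] [Fintype n] [Fintype p] [DecidableEq m] [DecidableEq n] [DecidableEq p]

lemma clm_apply (M : Matrix m n ℝ) (x : EuclideanSpace ℝ n) : clm M x = Matrix.toEuclideanLin M x := rfl

lemma clm_mul (M : Matrix m n ℝ) (N : Matrix n p ℝ) : clm (M * N) = (clm M).comp (clm N) := by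
  ext x
  simp [clm_apply, Matrix.toEuclideanLin_apply, Matrix.mulVec_mulVec]

lemma clm_add (M N : Matrix m n ℝ) : clm (M + N) = clm M + clm N := by
  ext x; simp [clm_apply, map_add]

lemma clm_zero : clm (0 : Matrix m n ℝ) = 0 := by
  ext x; simp [clm_apply]

lemma clm_inner (M : Matrix m n ℝ) (x : EuclideanSpace ℝ n) (y : EuclideanSpace ℝ m) :
    ⟪clm M x, y⟫ = ⟪x, clm Mᵀ y⟫ := by
  have h : (Mᵀ : Matrix n m ℝ) = Mᴴ := (Matrix.conjTranspose_eq_transpose_of_trivial M).symm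
  rw [clm_apply, clm_apply, h, Matrix.toEuclideanLin_conjTranspose_eq_adjoint,
    LinearMap.adjoint_inner_right]

lemma specNorm_eq_norm_clm (M : Matrix m n ℝ) : specNorm M = ‖clm M‖ := rfl

lemma specNorm_nonneg (M : Matrix m n ℝ) : 0 ≤ specNorm M := norm_nonneg _

lemma norm_clm_apply_le (M : Matrix m n ℝ) (x : EuclideanSpace ℝ n) :
    ‖clm M x‖ ≤ specNorm M * ‖x‖ := (clm M).le_opNorm x

lemma specNorm_le_of_bound (M : Matrix m n ℝ) (C : ℝ) (hC : 0 ≤ C)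
    (h : ∀ x, ‖clm M x‖ ≤ C * ‖x‖) : specNorm M ≤ C :=
  ContinuousLinearMap.opNorm_le_bound _ hC h

lemma specNorm_mul_le (M : Matrix m n ℝ) (N : Matrix n p ℝ) :
    specNorm (M * N) ≤ specNorm M * specNorm N := by
  rw [specNorm_eq_norm_clm, clm_mul]
  exact ContinuousLinearMap.opNorm_comp_le _ _

lemma specNorm_add_le (M N : Matrix m n ℝ) :
    specNorm (M + N) ≤ specNorm M + specNorm N := by
  rw [specNorm_eq_norm_clm, clm_add]; exact norm_add_le _ _

lemma clm_neg (M : Matrix m n ℝ) : clm (-M) = -(clm M) := by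
  ext x; simp [clm_apply, map_neg]

lemma specNorm_neg (M : Matrix m n ℝ) : specNorm (-M) = specNorm M := by
  rw [specNorm_eq_norm_clm, clm_neg, norm_neg]; rfl

lemma specNorm_sub_le (M N : Matrix m n ℝ) :
    specNorm (M - N) ≤ specNorm M + specNorm N := by
  rw [sub_eq_add_neg]
  exact (specNorm_add_le M (-N)).trans (by rw [specNorm_neg])

lemma norm_clm_isometry (V : Matrix m n ℝ) (hV : Vᵀ * V = 1) (x : EuclideanSpace ℝ n) :
    ‖clm V x‖ = ‖x‖ := by
  have h1 : ⟪clm V x, clm V x⟫ = ⟪x, x⟫ := by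
    rw [clm_inner]
    have : clm Vᵀ (clm V x) = clm (Vᵀ * V) x := by rw [clm_mul]; rfl
    rw [this, hV]
    congr 1
    simp [clm_apply, Matrix.toEuclideanLin_apply, Matrix.one_mulVec]
  have h2 : ‖clm V x‖^2 = ‖x‖^2 := by
    rw [← real_inner_self_eq_norm_sq, ← real_inner_self_eq_norm_sq, h1]
  nlinarith [norm_nonneg (clm V x), norm_nonneg x]

lemma specNorm_isometry_le (V : Matrix m n ℝ) (hV : Vᵀ * V = 1) : specNorm V ≤ 1 := by
  apply specNorm_le_of_bound _ _ zero_le_one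
  intro x; rw [norm_clm_isometry V hV x, one_mul]

lemma specNorm_transpose_le (M : Matrix m n ℝ) : specNorm Mᵀ ≤ specNorm M := by
  apply specNorm_le_of_bound _ _ (specNorm_nonneg M)
  intro y
  have h1 : ‖clm Mᵀ y‖^2 = ⟪y, clm M (clm Mᵀ y)⟫ := by
    rw [← real_inner_self_eq_norm_sq]
    have := clm_inner Mᵀ y (clm Mᵀ y)
    rw [Matrix.transpose_transpose] at this
    exact this
  have h2 : ⟪y, clm M (clm Mᵀ y)⟫ ≤ ‖y‖ * (specNorm M * ‖clm Mᵀ y‖) :=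
    (real_inner_le_norm _ _).trans
      (mul_le_mul_of_nonneg_left (norm_clm_apply_le _ _) (norm_nonneg y))
  rcases eq_or_lt_of_le (norm_nonneg (clm Mᵀ y)) with h | h
  · rw [← h]; exact mul_nonneg (specNorm_nonneg M) (norm_nonneg y)
  · nlinarith

lemma specNorm_transpose (M : Matrix m n ℝ) : specNorm Mᵀ = specNorm M :=
  le_antisymm (specNorm_transpose_le M)
    (by simpa [Matrix.transpose_transpose] using specNorm_transpose_le Mᵀ)

lemma specNorm_mul3_le {q : Type*} [Fintype q] [DecidableEq q]
    (X : Matrix m n ℝ) (Y : Matrix n p ℝ) (Z : Matrix p q ℝ) :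
    specNorm (X * Y * Z) ≤ specNorm X * specNorm Y * specNorm Z := by
  calc specNorm (X * Y * Z) ≤ specNorm (X * Y) * specNorm Z := specNorm_mul_le _ _
    _ ≤ specNorm X * specNorm Y * specNorm Z :=
        mul_le_mul_of_nonneg_right (specNorm_mul_le _ _) (specNorm_nonneg _)

lemma specNorm_le_frobNorm (M : Matrix m n ℝ) : specNorm M ≤ frobNorm M := by
  apply specNorm_le_of_bound _ _ (Real.sqrt_nonneg _)
  intro x
  rw [clm_apply, Matrix.toEuclideanLin_apply]
  rw [EuclideanSpace.norm_eq, EuclideanSpace.norm_eq]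
  have hx : ∀ j, ‖x j‖ = |x j| := fun j => rfl
  have key : ∑ i, ‖(M *ᵥ (WithLp.equiv 2 (n → ℝ)) x) i‖^2
      ≤ (∑ i, ∑ j, (M i j)^2) * ∑ j, ‖x j‖^2 := by
    have : ∀ i, ‖(M *ᵥ (WithLp.equiv 2 (n → ℝ)) x) i‖^2
        ≤ (∑ j, (M i j)^2) * ∑ j, ‖x j‖^2 := by
      intro i
      have h1 : ‖(M *ᵥ (WithLp.equiv 2 (n → ℝ)) x) i‖^2
          = (∑ j, M i j * x j)^2 := by
        rw [Real.norm_eq_abs, sq_abs]; rfl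
      rw [h1]
      calc (∑ j, M i j * x j)^2 ≤ (∑ j, (M i j)^2) * ∑ j, (x j)^2 :=
            Finset.sum_mul_sq_le_sq_mul_sq _ _ _
        _ = (∑ j, (M i j)^2) * ∑ j, ‖x j‖^2 := by
            simp [Real.norm_eq_abs, sq_abs]
    calc ∑ i, ‖(M *ᵥ (WithLp.equiv 2 (n → ℝ)) x) i‖^2
        ≤ ∑ i, (∑ j, (M i j)^2) * ∑ j, ‖x j‖^2 := Finset.sum_le_sum fun i _ => this i
      _ = (∑ i, ∑ j, (M i j)^2) * ∑ j, ‖x j‖^2 := by rw [← Finset.sum_mul]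
  have hnn : (0:ℝ) ≤ ∑ i, ∑ j, (M i j)^2 := by positivity
  calc Real.sqrt (∑ i, ‖((WithLp.equiv 2 (m → ℝ)).symm (M *ᵥ (WithLp.equiv 2 (n → ℝ)) x)) i‖^2)
      = Real.sqrt (∑ i, ‖(M *ᵥ (WithLp.equiv 2 (n → ℝ)) x) i‖^2) := rfl
    _ ≤ Real.sqrt ((∑ i, ∑ j, (M i j)^2) * ∑ j, ‖x j‖^2) := Real.sqrt_le_sqrt key
    _ = frobNorm M * Real.sqrt (∑ j, ‖x j‖^2) := by
        rw [Real.sqrt_mul hnn]; rfl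

private lemma aux_mul3 {x a b c : ℝ} (h : x ≤ a*b*c) (ha : a ≤ 1) (hc : c ≤ 1)
    (ha0 : 0 ≤ a) (hb0 : 0 ≤ b) (hc0 : 0 ≤ c) : x ≤ b := by
  calc x ≤ a*b*c := h
    _ ≤ 1*b*c := mul_le_mul_of_nonneg_right (mul_le_mul_of_nonneg_right ha hb0) hc0
    _ = b*c := by ring
    _ ≤ b*1 := mul_le_mul_of_nonneg_left hc hb0
    _ = b := mul_one b

private lemma aux_mul3' {x a b c d : ℝ} (h : x ≤ a*b*c) (ha : a ≤ 1) (hc : c ≤ d)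
    (ha0 : 0 ≤ a) (hb0 : 0 ≤ b) (hc0 : 0 ≤ c) : x ≤ b * d := by
  calc x ≤ a*b*c := h
    _ ≤ 1*b*c := mul_le_mul_of_nonneg_right (mul_le_mul_of_nonneg_right ha hb0) hc0
    _ = b*c := by ring
    _ ≤ b*d := mul_le_mul_of_nonneg_left hc hb0

private lemma aux_mul3'' {x a b c d : ℝ} (h : x ≤ a*b*c) (ha : a ≤ d) (hc : c ≤ 1)
    (ha0 : 0 ≤ a) (hb0 : 0 ≤ b) (hc0 : 0 ≤ c) : x ≤ b * d := by
  calc x ≤ a*b*c := h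
    _ ≤ a*b*1 := mul_le_mul_of_nonneg_left hc (mul_nonneg ha0 hb0)
    _ = a*b := mul_one _
    _ ≤ d*b := mul_le_mul_of_nonneg_right ha hb0
    _ = b*d := mul_comm _ _

private lemma aux_fin {x u e v B w : ℝ} (h : x ≤ u*e*v) (he : e ≤ B) (hv : v ≤ w)
    (hu : 0 ≤ u) (he0 : 0 ≤ e) (hv0 : 0 ≤ v) (hB : 0 ≤ B) : x ≤ u*B*w := by
  calc x ≤ u*e*v := h
    _ ≤ u*B*v := mul_le_mul_of_nonneg_right (mul_le_mul_of_nonneg_left he hu) hv0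
    _ ≤ u*B*w := mul_le_mul_of_nonneg_left hv (mul_nonneg hu hB)

theorem stmt_3 {n K : ℕ}
    (A P : Matrix (Fin n) (Fin n) ℝ) (hA : Aᵀ = A) (hP : Pᵀ = P) (hrank : P.rank = K)
    (U Uh : Matrix (Fin n) (Fin K) ℝ) (L Lh : Matrix (Fin K) (Fin K) ℝ)
    (hLdiag : L.IsDiag) (hLhdiag : Lh.IsDiag)
    (hU : Uᵀ * U = 1) (hUh : Uhᵀ * Uh = 1)
    (hPdecomp : P = U * L * Uᵀ) (hAeig : A * Uh = Uh * Lh)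
    (hbest : specNorm (Uh * Lh * Uhᵀ - U * L * Uᵀ) ≤ specNorm (A - P))
    (lK : ℝ) (hlK : 0 < lK) (hlKval : specNorm L⁻¹ = 1 / lK)
    (lKA : ℝ) (hlKA : 0 < lKA) (hlKAval : specNorm Lh⁻¹ = 1 / lKA)
    (O : Matrix (Fin K) (Fin K) ℝ) (hO : Oᵀ * O = 1)
    (hDK : frobNorm (Uh - U * O) ≤ 2 * Real.sqrt (2 * K) * specNorm (A - P) / lK) :
    specNorm (Lh⁻¹ - Oᵀ * L⁻¹ * O)
      ≤ (2 * Real.sqrt (2 * K) * (specNorm A + specNorm P) / lK + 1) * specNorm (A - P)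
          / (lKA * lK) := by
  -- invertibility of L and Lh
  have hdetL : IsUnit L.det := by
    by_contra h
    rw [Matrix.nonsing_inv_apply_not_isUnit _ h] at hlKval
    have h0 : specNorm (0 : Matrix (Fin K) (Fin K) ℝ) = 0 := by
      rw [specNorm_eq_norm_clm, clm_zero, norm_zero]
    rw [h0] at hlKval
    have : (0:ℝ) < 1 / lK := by positivity
    linarith
  have hdetLh : IsUnit Lh.det := by
    by_contra h
    rw [Matrix.nonsing_inv_apply_not_isUnit _ h] at hlKAval
    have h0 : specNorm (0 : Matrix (Fin K) (Fin K) ℝ) = 0 := by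
      rw [specNorm_eq_norm_clm, clm_zero, norm_zero]
    rw [h0] at hlKAval
    have : (0:ℝ) < 1 / lKA := by positivity
    linarith
  have hOO : O * Oᵀ = 1 := mul_eq_one_comm.mp hO
  set M : Matrix (Fin K) (Fin K) ℝ := Oᵀ * L * O with hM
  set N : Matrix (Fin K) (Fin K) ℝ := Oᵀ * L⁻¹ * O with hN
  have hMN : M * N = 1 := by
    have h1 : M * N = Oᵀ * (L * (O * (Oᵀ * (L⁻¹ * O)))) := by
      rw [hM, hN]; simp only [Matrix.mul_assoc]
    rw [h1, ← Matrix.mul_assoc O Oᵀ, hOO, Matrix.one_mul,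
      ← Matrix.mul_assoc L L⁻¹, Matrix.mul_nonsing_inv _ hdetL, Matrix.one_mul, hO]
  have hLhinv : Lh⁻¹ * Lh = 1 := Matrix.nonsing_inv_mul _ hdetLh
  -- key factorization
  have hfact : Lh⁻¹ - N = Lh⁻¹ * (M - Lh) * N := by
    rw [Matrix.mul_sub, Matrix.sub_mul, Matrix.mul_assoc, hMN, Matrix.mul_one, hLhinv,
      Matrix.one_mul]
  -- identities for L and Lh
  have hLid : L = Uᵀ * P * U := by
    rw [hPdecomp]
    have h1 : Uᵀ * (U * L * Uᵀ) * U = (Uᵀ * U) * L * (Uᵀ * U) := by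
      simp only [Matrix.mul_assoc]
    rw [h1, hU, Matrix.one_mul, Matrix.mul_one]
  have hLhid : Lh = Uhᵀ * A * Uh := by
    rw [Matrix.mul_assoc, hAeig, ← Matrix.mul_assoc, hUh, Matrix.one_mul]
  -- the perturbation decomposition
  set V : Matrix (Fin n) (Fin K) ℝ := U * O with hV
  set D : Matrix (Fin n) (Fin K) ℝ := Uh - V with hD
  have hE : M - Lh = Vᵀ * (P - A) * Uh - Vᵀ * P * D - Dᵀ * A * Uh := by
    rw [hM, hLid, hLhid, hD, hV]
    simp only [Matrix.transpose_mul, Matrix.transpose_sub, Matrix.mul_sub, Matrix.sub_mul,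
      Matrix.mul_assoc]
    abel
  -- norm bounds
  have hVV : Vᵀ * V = 1 := by
    rw [hV, Matrix.transpose_mul]
    have h1 : Oᵀ * Uᵀ * (U * O) = Oᵀ * ((Uᵀ * U) * O) := by simp only [Matrix.mul_assoc]
    rw [h1, hU, Matrix.one_mul, hO]
  have hVt1 : specNorm Vᵀ ≤ 1 := by rw [specNorm_transpose]; exact specNorm_isometry_le _ hVV
  have hW1 : specNorm Uh ≤ 1 := specNorm_isometry_le _ hUh
  set s := specNorm (A - P) with hs
  set a := specNorm A with ha
  set p := specNorm P with hp
  set δ := 2 * Real.sqrt (2 * K) * s / lK with hδ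
  have hs0 : 0 ≤ s := specNorm_nonneg _
  have hδ0 : 0 ≤ δ := by
    rw [hδ]; positivity
  have hPAs : specNorm (P - A) = s := by rw [hs, ← specNorm_neg, neg_sub]
  have hDδ : specNorm D ≤ δ := by
    rw [hD]
    exact (specNorm_le_frobNorm _).trans hDK
  have hDt : specNorm Dᵀ ≤ δ := by rw [specNorm_transpose]; exact hDδ
  -- bound each of three terms
  have b1 : specNorm (Vᵀ * (P - A) * Uh) ≤ s := by
    have h := specNorm_mul3_le Vᵀ (P - A) Uh
    rw [hPAs] at h
    exact aux_mul3 h hVt1 hW1 (specNorm_nonneg _) hs0 (specNorm_nonneg _)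
  have b2 : specNorm (Vᵀ * P * D) ≤ p * δ := by
    have h := specNorm_mul3_le Vᵀ P D
    exact aux_mul3' h hVt1 hDδ (specNorm_nonneg _) (specNorm_nonneg _) (specNorm_nonneg _)
  have b3 : specNorm (Dᵀ * A * Uh) ≤ a * δ := by
    have h := specNorm_mul3_le Dᵀ A Uh
    exact aux_mul3'' h hDt hW1 (specNorm_nonneg _) (specNorm_nonneg _) (specNorm_nonneg _)
  have hEbound : specNorm (M - Lh) ≤ s + p * δ + a * δ := by
    rw [hE]
    calc specNorm (Vᵀ * (P - A) * Uh - Vᵀ * P * D - Dᵀ * A * Uh)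
        ≤ specNorm (Vᵀ * (P - A) * Uh - Vᵀ * P * D) + specNorm (Dᵀ * A * Uh) :=
          specNorm_sub_le _ _
      _ ≤ (specNorm (Vᵀ * (P - A) * Uh) + specNorm (Vᵀ * P * D)) + specNorm (Dᵀ * A * Uh) := by
          have := specNorm_sub_le (Vᵀ * (P - A) * Uh) (Vᵀ * P * D)
          linarith
      _ ≤ s + p * δ + a * δ := by linarith
  -- bound on N
  have hOt1 : specNorm Oᵀ ≤ 1 := by rw [specNorm_transpose]; exact specNorm_isometry_le _ hO
  have hO1 : specNorm O ≤ 1 := specNorm_isometry_le _ hO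
  have hNbound : specNorm N ≤ 1 / lK := by
    have h := specNorm_mul3_le Oᵀ L⁻¹ O
    rw [hlKval] at h
    exact aux_mul3 h hOt1 hO1 (specNorm_nonneg _) (by positivity) (specNorm_nonneg _)
  -- final
  have hmain : specNorm (Lh⁻¹ - N) ≤ (1/lKA) * (s + p * δ + a * δ) * (1/lK) := by
    rw [hfact]
    have h := specNorm_mul3_le Lh⁻¹ (M - Lh) N
    rw [hlKAval] at h
    exact aux_fin h hEbound hNbound (by positivity) (specNorm_nonneg _) (specNorm_nonneg _)
      (by linarith [mul_nonneg (specNorm_nonneg P) hδ0, mul_nonneg (specNorm_nonneg A) hδ0])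
  have heq : (1/lKA) * (s + p * δ + a * δ) * (1/lK)
      = (2 * Real.sqrt (2 * K) * (a + p) / lK + 1) * s / (lKA * lK) := by
    rw [hδ]
    field_simp
    ring
  rw [← heq]
  exact hmain
end

section
/- Let Θ, Θ' ∈ [0,1]^{n×K} have rows summing to 1 and each contain at least one pure node per community (a row equal to each standard basis vector), and let B, B' ∈ [0,1]^{K×K} be symmetric invertible matrices. If Θ B Θᵀ = Θ' B' Θ'ᵀ then there exists a K×K permutation matrix Π such that Θ = Θ' Π and B = Πᵀ B' Π. -/
open scoped BigOperators
open scoped Matrix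

lemma perm_mul_transposeX {K : ℕ} (σ : Equiv.Perm (Fin K)) :
    (σ.toPEquiv.toMatrix : Matrix (Fin K) (Fin K) ℝ) * (σ.toPEquiv.toMatrix)ᵀ = 1 := by
  rw [← PEquiv.toMatrix_symm, ← PEquiv.toMatrix_trans, ← Equiv.toPEquiv_symm,
    ← Equiv.toPEquiv_trans, Equiv.self_trans_symm, Equiv.toPEquiv_refl, PEquiv.toMatrix_refl]

lemma perm_transpose_mulX {K : ℕ} (σ : Equiv.Perm (Fin K)) :
    (σ.toPEquiv.toMatrix : Matrix (Fin K) (Fin K) ℝ)ᵀ * (σ.toPEquiv.toMatrix) = 1 := by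
  rw [← PEquiv.toMatrix_symm, ← PEquiv.toMatrix_trans, ← Equiv.toPEquiv_symm,
    ← Equiv.toPEquiv_trans, Equiv.symm_trans_self, Equiv.toPEquiv_refl, PEquiv.toMatrix_refl]

theorem stmt_5 {n K : ℕ} (Θ Θ' : Matrix (Fin n) (Fin K) ℝ)
    (B B' : Matrix (Fin K) (Fin K) ℝ)
    (hΘ01 : ∀ i k, Θ i k ∈ Set.Icc (0:ℝ) 1) (hΘ'01 : ∀ i k, Θ' i k ∈ Set.Icc (0:ℝ) 1)
    (hrow : ∀ i, ∑ k, Θ i k = 1) (hrow' : ∀ i, ∑ k, Θ' i k = 1)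
    (hpure : ∀ k, ∃ i, ∀ l, Θ i l = if l = k then 1 else 0)
    (hpure' : ∀ k, ∃ i, ∀ l, Θ' i l = if l = k then 1 else 0)
    (hBsym : Bᵀ = B) (hB'sym : B'ᵀ = B')
    (hB : IsUnit B.det) (hB' : IsUnit B'.det)
    (hB01 : ∀ k l, B k l ∈ Set.Icc (0:ℝ) 1) (hB'01 : ∀ k l, B' k l ∈ Set.Icc (0:ℝ) 1)
    (heq : Θ * B * Θᵀ = Θ' * B' * Θ'ᵀ) :
    ∃ σ : Equiv.Perm (Fin K),
      Θ = Θ' * (σ.toPEquiv.toMatrix : Matrix (Fin K) (Fin K) ℝ) ∧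
      B = (σ.toPEquiv.toMatrix : Matrix (Fin K) (Fin K) ℝ)ᵀ * B'
            * (σ.toPEquiv.toMatrix : Matrix (Fin K) (Fin K) ℝ) := by
  classical
  choose f hf using hpure
  choose g hg using hpure'
  set R : Matrix (Fin K) (Fin K) ℝ := fun k l => Θ' (f k) l with hRdef
  set R' : Matrix (Fin K) (Fin K) ℝ := fun k l => Θ (g k) l with hR'def
  have hE : ∀ i j, (Θ * B * Θᵀ) i j = (Θ' * B' * Θ'ᵀ) i j := fun i j => by rw [heq]
  -- key1 : B = R * B' * Rᵀ
  have key1 : B = R * B' * Rᵀ := by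
    ext k l
    have h := hE (f k) (f l)
    simp only [Matrix.mul_apply, Matrix.transpose_apply, hf, ite_mul, mul_ite, one_mul,
      mul_one, zero_mul, mul_zero, Finset.sum_ite_eq, Finset.sum_ite_eq', Finset.mem_univ,
      if_true] at h
    simp only [Matrix.mul_apply, Matrix.transpose_apply, hRdef]
    exact h
  -- key2 : B * R'ᵀ = R * B'
  have key2 : B * R'ᵀ = R * B' := by
    ext k l
    have h := hE (f k) (g l)
    simp only [Matrix.mul_apply, Matrix.transpose_apply, hf, hg, ite_mul, mul_ite, one_mul,
      mul_one, zero_mul, mul_zero, Finset.sum_ite_eq, Finset.sum_ite_eq', Finset.mem_univ,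
      if_true] at h
    simp only [Matrix.mul_apply, Matrix.transpose_apply, hRdef, hR'def]
    exact h
  -- key3 : Θ * B = Θ' * B' * Rᵀ
  have key3 : Θ * B = Θ' * B' * Rᵀ := by
    ext i l
    have h := hE i (f l)
    simp only [Matrix.mul_apply, Matrix.transpose_apply, hf, ite_mul, mul_ite, one_mul,
      mul_one, zero_mul, mul_zero, Finset.sum_ite_eq, Finset.sum_ite_eq', Finset.mem_univ,
      if_true] at h
    simp only [Matrix.mul_apply, Matrix.transpose_apply, hRdef]
    exact h
  haveI := B.invertibleOfIsUnitDet hB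
  haveI := B'.invertibleOfIsUnitDet hB'
  have h5 : R'ᵀ * Rᵀ = 1 := by
    have h4 : B * (R'ᵀ * Rᵀ) = B * 1 := by
      rw [Matrix.mul_one, ← Matrix.mul_assoc, key2, ← key1]
    exact Matrix.mul_right_injective_of_invertible B h4
  have hRR' : R * R' = 1 := by
    have h := congrArg Matrix.transpose h5
    simpa [Matrix.transpose_mul] using h
  -- combinatorial step
  have hstep : ∀ k, ∃ a, R k a ≠ 0 ∧ ∀ l, R' a l = if l = k then 1 else 0 := by
    intro k
    have hRsum : ∑ a, R k a = 1 := hrow' (f k)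
    have hdiag : ∑ a, R k a * R' a k = 1 := by
      have h := congrFun (congrFun hRR' k) k
      simpa [Matrix.mul_apply, Matrix.one_apply] using h
    have hzero : ∀ a ∈ Finset.univ, R k a - R k a * R' a k = 0 := by
      refine (Finset.sum_eq_zero_iff_of_nonneg ?_).1 ?_
      · intro a _
        have h1 := (hΘ'01 (f k) a).1
        have h2 := (hΘ01 (g a) k).2
        simp only [hRdef, hR'def]
        nlinarith
      · rw [Finset.sum_sub_distrib, hRsum, hdiag]; ring
    obtain ⟨a, ha⟩ : ∃ a, R k a ≠ 0 := by
      by_contra h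
      push_neg at h
      rw [Finset.sum_congr rfl fun a _ => h a] at hRsum
      simp at hRsum
    refine ⟨a, ha, ?_⟩
    have hak : R' a k = 1 := by
      have h := hzero a (Finset.mem_univ a)
      have h2 : R k a * (1 - R' a k) = 0 := by linarith [h]
      rcases mul_eq_zero.1 h2 with h3 | h3
      · exact absurd h3 ha
      · linarith
    intro l
    by_cases hl : l = k
    · simp [hl, hak]
    · simp only [hl, if_false]
      have hsum := hrow (g a)
      have hrest : ∑ l' ∈ Finset.univ.erase k, R' a l' = 0 := by
        have h := Finset.add_sum_erase Finset.univ (fun l' => R' a l') (Finset.mem_univ k)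
        simp only [hR'def] at hak ⊢
        linarith [h, hsum, hak]
      have := (Finset.sum_eq_zero_iff_of_nonneg ?_).1 hrest l (Finset.mem_erase.2 ⟨hl, Finset.mem_univ l⟩)
      · exact this
      · intro l' _
        exact (hΘ01 (g a) l').1
  choose τf hτ1 hτ2 using hstep
  have hinj : Function.Injective τf := by
    intro k k' h
    by_contra hne
    have h1 := hτ2 k k
    have h2 := hτ2 k' k
    rw [h] at h1
    rw [h1] at h2
    simp [hne] at h2
  let τ : Equiv.Perm (Fin K) := Equiv.ofBijective τf (Finite.injective_iff_bijective.1 hinj)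
  refine ⟨τ.symm, ?_⟩
  have hR'P : R' = (τ.symm.toPEquiv.toMatrix : Matrix (Fin K) (Fin K) ℝ) := by
    ext a l
    have ha : τf (τ.symm a) = a := τ.apply_symm_apply a
    have h := hτ2 (τ.symm a) l
    rw [ha] at h
    rw [h, PEquiv.toMatrix_toPEquiv_eq, Matrix.submatrix_apply, Matrix.one_apply]
    simp [eq_comm]
  have hPPt : R' * R'ᵀ = 1 := by rw [hR'P]; exact perm_mul_transposeX _
  have hPtP : R'ᵀ * R' = 1 := by rw [hR'P]; exact perm_transpose_mulX _
  have hReq : R = R'ᵀ := by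
    calc R = R * (R' * R'ᵀ) := by rw [hPPt, Matrix.mul_one]
    _ = (R * R') * R'ᵀ := by rw [Matrix.mul_assoc]
    _ = R'ᵀ := by rw [hRR', Matrix.one_mul]
  have hBfinal : B = R'ᵀ * B' * R' := by
    rw [key1, hReq, Matrix.transpose_transpose]
  have hΘfinal : Θ = Θ' * R' := by
    have h1 : Θ * B = Θ' * B' * R' := by rw [key3, hReq, Matrix.transpose_transpose]
    have h2 : Θ * R'ᵀ * B' = Θ' * B' := by
      have h3 : Θ * R'ᵀ * B' * R' = Θ' * B' * R' := by
        rw [← h1, hBfinal]; simp [Matrix.mul_assoc]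
      have h4 := congrArg (fun X => X * R'ᵀ) h3
      simpa [Matrix.mul_assoc, hPPt] using h4
    have h5 : Θ * R'ᵀ = Θ' := Matrix.mul_left_injective_of_invertible B' h2
    calc Θ = Θ * (R'ᵀ * R') := by rw [hPtP, Matrix.mul_one]
    _ = (Θ * R'ᵀ) * R' := by rw [Matrix.mul_assoc]
    _ = Θ' * R' := by rw [h5]
  rw [← hR'P]
  exact ⟨hΘfinal, hBfinal⟩
end

section
/- Let Θ ∈ ℝ^{n×K} and B ∈ ℝ^{K×K} symmetric positive semidefinite, and set P = Θ B Θᵀ. Then λ_min(ΘᵀΘ) · λ_min(B) ≤ λ_min(P restricted to its column space), and in particular the smallest nonzero eigenvalue of P satisfies λ_K(P) ≥ λ_min(B)·λ_min(ΘᵀΘ) whenever Θ has rank K and B is positive definite. -/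
open scoped BigOperators
open scoped Matrix

lemma inner_toEuclideanLin_eq {m : Type*} [Fintype m] [DecidableEq m]
    (M : Matrix m m ℝ) (x : EuclideanSpace ℝ m) :
    @inner ℝ _ _ x (Matrix.toEuclideanLin M x)
      = (WithLp.equiv 2 _ x) ⬝ᵥ M.mulVec (WithLp.equiv 2 _ x) := by
  simp [PiLp.inner_apply, Matrix.toEuclideanLin_apply, dotProduct, RCLike.inner_apply, mul_comm]

lemma euclid_inner_eq {m : Type*} [Fintype m] (x y : m → ℝ) :
    @inner ℝ _ _ ((WithLp.equiv 2 (m → ℝ)).symm x) ((WithLp.equiv 2 (m → ℝ)).symm y) = x ⬝ᵥ y := by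
  simp [PiLp.inner_apply, dotProduct, RCLike.inner_apply, mul_comm]

lemma dot_self_nonneg {m : Type*} [Fintype m] (x : m → ℝ) : 0 ≤ x ⬝ᵥ x := by
  have : x ⬝ᵥ x = ∑ i, x i ^ 2 := by simp [dotProduct, sq]
  rw [this]
  positivity

lemma dot_sq_le {m : Type*} [Fintype m] (x y : m → ℝ) :
    (x ⬝ᵥ y) * (x ⬝ᵥ y) ≤ (x ⬝ᵥ x) * (y ⬝ᵥ y) := by
  have := real_inner_mul_inner_self_le ((WithLp.equiv 2 (m → ℝ)).symm x)
    ((WithLp.equiv 2 (m → ℝ)).symm y)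
  simp only [← real_inner_self_eq_norm_sq, euclid_inner_eq] at this
  exact this

lemma lamMin_bddBelow {m : Type*} [Fintype m] [DecidableEq m] (M : Matrix m m ℝ) :
    BddBelow (Set.range fun v : {v : EuclideanSpace ℝ m // ‖v‖ = 1} =>
      @inner ℝ _ _ v.1 (Matrix.toEuclideanLin M v.1)) := by
  refine ⟨-‖(Matrix.toEuclideanLin M).toContinuousLinearMap‖, ?_⟩
  rintro x ⟨v, rfl⟩
  show -‖(Matrix.toEuclideanLin M).toContinuousLinearMap‖
      ≤ @inner ℝ _ _ v.1 (Matrix.toEuclideanLin M v.1)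
  have h1 : |@inner ℝ _ _ v.1 (Matrix.toEuclideanLin M v.1)|
      ≤ ‖v.1‖ * ‖Matrix.toEuclideanLin M v.1‖ := abs_real_inner_le_norm _ _
  have h2 : ‖Matrix.toEuclideanLin M v.1‖
      ≤ ‖(Matrix.toEuclideanLin M).toContinuousLinearMap‖ * ‖v.1‖ :=
    (Matrix.toEuclideanLin M).toContinuousLinearMap.le_opNorm v.1
  rw [v.2, one_mul] at h1
  rw [v.2, mul_one] at h2
  have := neg_abs_le (@inner ℝ _ _ v.1 (Matrix.toEuclideanLin M v.1))
  linarith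

/-- Rayleigh lower bound in dot-product form. -/
lemma lamMin_dot {m : Type*} [Fintype m] [DecidableEq m]
    (M : Matrix m m ℝ) (x : m → ℝ) :
    lamMin M * (x ⬝ᵥ x) ≤ x ⬝ᵥ M.mulVec x := by
  rcases eq_or_ne x 0 with rfl | hx
  · simp
  · set xe : EuclideanSpace ℝ m := (WithLp.equiv 2 (m → ℝ)).symm x with hxe
    have hxe0 : xe ≠ 0 := by
      simpa [hxe] using hx
    have hxn : (0 : ℝ) < ‖xe‖ := norm_pos_iff.mpr hxe0
    set u : EuclideanSpace ℝ m := ‖xe‖⁻¹ • xe with hu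
    have hun : ‖u‖ = 1 := by
      rw [hu, norm_smul]; simp [abs_of_pos hxn, inv_mul_cancel₀ hxn.ne']
    have hle : lamMin M ≤ @inner ℝ _ _ u (Matrix.toEuclideanLin M u) :=
      ciInf_le (lamMin_bddBelow M) ⟨u, hun⟩
    have hexp : @inner ℝ _ _ u (Matrix.toEuclideanLin M u)
        = ‖xe‖⁻¹ * ‖xe‖⁻¹ * @inner ℝ _ _ xe (Matrix.toEuclideanLin M xe) := by
      rw [hu, map_smul, real_inner_smul_left, real_inner_smul_right]
      ring
    have hdot : @inner ℝ _ _ xe (Matrix.toEuclideanLin M xe) = x ⬝ᵥ M.mulVec x := by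
      rw [inner_toEuclideanLin_eq]
      simp [hxe]
    have hself : ‖xe‖ ^ 2 = x ⬝ᵥ x := by
      rw [← real_inner_self_eq_norm_sq, hxe, euclid_inner_eq]
    rw [hexp, hdot] at hle
    have h3 : ‖xe‖⁻¹ * ‖xe‖⁻¹ * ‖xe‖ ^ 2 = 1 := by
      field_simp [sq]
    calc lamMin M * (x ⬝ᵥ x) ≤ (‖xe‖⁻¹ * ‖xe‖⁻¹ * (x ⬝ᵥ M.mulVec x)) * (x ⬝ᵥ x) := by
          have hxx : 0 ≤ x ⬝ᵥ x := dot_self_nonneg x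
          exact mul_le_mul_of_nonneg_right hle hxx
      _ = (‖xe‖⁻¹ * ‖xe‖⁻¹ * ‖xe‖ ^ 2) * (x ⬝ᵥ M.mulVec x) := by rw [hself]; ring
      _ = x ⬝ᵥ M.mulVec x := by rw [h3, one_mul]

theorem stmt_8 {n K : ℕ} (Θ : Matrix (Fin n) (Fin K) ℝ) (hΘ : Θ.rank = K)
    (B : Matrix (Fin K) (Fin K) ℝ) (hB : B.PosDef) :
    ∀ c : ℝ, c ≠ 0 → (∃ v : Fin n → ℝ, v ≠ 0 ∧ (Θ * B * Θᵀ).mulVec v = c • v) →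
      lamMin B * lamMin (Θᵀ * Θ) ≤ c := by
  intro c hc ⟨v, hv, heig⟩
  rcases Nat.eq_zero_or_pos K with hK | hK
  · exfalso
    subst hK
    have hz : (Θ * B * Θᵀ) = 0 := by
      ext i j
      simp [Matrix.mul_apply]
    rw [hz, Matrix.zero_mulVec] at heig
    apply hv
    funext i
    have h := congrFun heig.symm i
    simp only [Pi.smul_apply, Pi.zero_apply, smul_eq_mul] at h
    exact (mul_eq_zero.mp h).resolve_left hc
  haveI : Nonempty {v : EuclideanSpace ℝ (Fin K) // ‖v‖ = 1} :=
    ⟨⟨EuclideanSpace.single ⟨0, hK⟩ (1 : ℝ), by simp [EuclideanSpace.norm_single]⟩⟩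
  set u : Fin K → ℝ := Θᵀ.mulVec v with hu
  set w : Fin K → ℝ := c⁻¹ • (B.mulVec u) with hw
  have hΘw : Θ.mulVec w = v := by
    rw [hw, Matrix.mulVec_smul]
    have h1 : Θ.mulVec (B.mulVec u) = (Θ * B * Θᵀ).mulVec v := by
      rw [hu, ← Matrix.mulVec_mulVec, ← Matrix.mulVec_mulVec]
    rw [h1, heig, smul_smul, inv_mul_cancel₀ hc, one_smul]
  set G : Matrix (Fin K) (Fin K) ℝ := Θᵀ * Θ with hG
  have hGw : G.mulVec w = u := by
    rw [hG, ← Matrix.mulVec_mulVec, hΘw, hu]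
  have hP : (Θ * B * Θᵀ).PosSemidef := by
    have := hB.posSemidef.mul_mul_conjTranspose_same Θ
    simpa using this
  -- key scalar quantities
  set a : ℝ := v ⬝ᵥ v with ha
  set ww : ℝ := w ⬝ᵥ w with hww
  set uu : ℝ := u ⬝ᵥ u with huu
  have hva : 0 < a := by
    have h0 : a = ∑ i, v i ^ 2 := by simp [ha, dotProduct, sq]
    rcases Function.ne_iff.mp hv with ⟨i, hi⟩
    rw [h0]
    exact lt_of_lt_of_le (pow_two_pos_of_ne_zero hi)
      (Finset.single_le_sum (fun j _ => sq_nonneg (v j)) (Finset.mem_univ i))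
  -- u ⬝ᵥ B u = c * a
  have key1 : u ⬝ᵥ B.mulVec u = c * a := by
    have h1 : v ⬝ᵥ (Θ * B * Θᵀ).mulVec v = u ⬝ᵥ B.mulVec u := by
      rw [← Matrix.mulVec_mulVec, ← Matrix.mulVec_mulVec, Matrix.dotProduct_mulVec,
        ← Matrix.mulVec_transpose]
    rw [← h1, heig, dotProduct_smul, smul_eq_mul, ha]
  -- w ⬝ᵥ G w = a
  have hwGw : w ⬝ᵥ G.mulVec w = a := by
    rw [hG, ← Matrix.mulVec_mulVec, Matrix.dotProduct_mulVec, Matrix.vecMul_transpose, hΘw, ha]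
  have hcpos : 0 < c := by
    have h0 : 0 ≤ v ⬝ᵥ (Θ * B * Θᵀ).mulVec v := by
      have := hP.dotProduct_mulVec_nonneg v
      simpa using this
    rw [heig, dotProduct_smul, smul_eq_mul, ← ha] at h0
    rcases hc.lt_or_gt with h | h
    · exfalso; nlinarith
    · exact h
  have hBmin : 0 ≤ lamMin B := by
    apply le_ciInf
    intro x
    rw [inner_toEuclideanLin_eq]
    simpa using hB.posSemidef.dotProduct_mulVec_nonneg (WithLp.equiv 2 (Fin K → ℝ) x.1)
  -- Rayleigh for B at u : lamMin B * uu ≤ c * a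
  have hrayB : lamMin B * uu ≤ c * a := by
    rw [← key1, huu]; exact lamMin_dot B u
  set lam : ℝ := lamMin (Θᵀ * Θ) with hlam
  rcases le_or_gt lam 0 with hl | hl
  · calc lamMin B * lam ≤ 0 := mul_nonpos_of_nonneg_of_nonpos hBmin hl
      _ ≤ c := hcpos.le
  · -- Rayleigh for G at w : lam * ww ≤ a
    have hrayG : lam * ww ≤ a := by
      rw [← hwGw, hww, hlam, ← hG]; exact lamMin_dot G w
    -- Cauchy-Schwarz : a^2 ≤ ww * uu  (since w ⬝ᵥ u = w ⬝ᵥ G w = a)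
    have hCS : a * a ≤ ww * uu := by
      have h1 : w ⬝ᵥ u = a := by rw [← hGw, hwGw]
      have := dot_sq_le w u
      rw [h1, ← hww, ← huu] at this
      exact this
    have huu0 : 0 ≤ uu := dot_self_nonneg u
    -- lam * a ≤ uu
    have hstep : lam * a ≤ uu := by
      have h1 : lam * (a * a) ≤ (lam * ww) * uu := by nlinarith
      have h2 : (lam * ww) * uu ≤ a * uu := mul_le_mul_of_nonneg_right hrayG huu0
      have h3 : (lam * a) * a ≤ uu * a := by nlinarith
      exact le_of_mul_le_mul_right h3 hva
    have hfinal : (lamMin B * lam) * a ≤ c * a := by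
      calc (lamMin B * lam) * a = lamMin B * (lam * a) := by ring
        _ ≤ lamMin B * uu := mul_le_mul_of_nonneg_left hstep hBmin
        _ ≤ c * a := hrayB
    exact le_of_mul_le_mul_right hfinal hva
end
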